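/- Let n = 2 p_1 p_2 ⋯ p_r be squarefree, where p_1,…,p_r are distinct odd primes. For 1 ≤ i ≤ r let p̂_i = n/(2 p_i), and choose a ∈ {1, 2} so that the sequence S = (a, p̂_1, p̂_2, …, p̂_r) in Z_n has an odd number of odd terms. Then S is a U(n)-extremal sequence for the Davenport constant; in particular S has length r + 1 = D_{U(n)}(n) − 1 and has no U(n)-weighted zero-sum subsequence. -/

import Mathlib

open Classical in
/-- The number of terms of the sequence `S` satisfying the predicate `P`. -/
noncomputable def pcount {α : Type*} (P : α → Prop) (S : List α) : ℕ :=
  S.countP fun x => decide (P x)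

/-- `S` is an `A`-weighted zero-sum sequence in `ZMod n`: there are weights
`a i ∈ A` with `∑ a i * x i = 0`. -/
def IsWZSum {n : ℕ} (A : Set (ZMod n)) (S : List (ZMod n)) : Prop :=
  ∃ w : List (ZMod n), w.length = S.length ∧ (∀ a ∈ w, a ∈ A) ∧
    (List.zipWith (· * ·) w S).sum = 0

/-- `S` has an `A`-weighted zero-sum subsequence of length `t ≥ 1`. -/
def HasWZSS {n : ℕ} (A : Set (ZMod n)) (S : List (ZMod n)) (t : ℕ) : Prop :=
  0 < t ∧ ∃ T : List (ZMod n), T.Sublist S ∧ T.length = t ∧ IsWZSum A T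

/-- `S` has a nonempty `A`-weighted zero-sum subsequence. -/
def HasWZS {n : ℕ} (A : Set (ZMod n)) (S : List (ZMod n)) : Prop :=
  ∃ T : List (ZMod n), T.Sublist S ∧ T ≠ [] ∧ IsWZSum A T

/-- The `A`-weighted Davenport constant `D_A(n)`: the least `k > 0` such that every
sequence of length `k` in `ZMod n` has a nonempty `A`-weighted zero-sum subsequence. -/
noncomputable def DavC (n : ℕ) (A : Set (ZMod n)) : ℕ :=
  sInf {k | 0 < k ∧ ∀ S : List (ZMod n), S.length = k → HasWZS A S}

/-- The `A`-weighted Gao constant `E_A(n)`: the least `k > 0` such that every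
sequence of length `k` in `ZMod n` has an `A`-weighted zero-sum subsequence of length `n`. -/
noncomputable def GaoC (n : ℕ) (A : Set (ZMod n)) : ℕ :=
  sInf {k | 0 < k ∧ ∀ S : List (ZMod n), S.length = k → HasWZSS A S n}

/-- The set of units of `ZMod n`. -/
def U (n : ℕ) : Set (ZMod n) := {x | IsUnit x}

/-- An `A`-extremal sequence for the Gao constant: a sequence of length `E_A(n) - 1`
with no `A`-weighted zero-sum subsequence of length `n`. -/
def IsGaoExtremal (n : ℕ) (A : Set (ZMod n)) (S : List (ZMod n)) : Prop :=
  S.length = GaoC n A - 1 ∧ ¬ HasWZSS A S n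

/-- `S` and `T` are `A`-equivalent: there are a unit `c`, weights `a i ∈ A` and a
permutation matching the multiset of terms `c * y j` with the multiset `a i * x i`. -/
def AEquiv {n : ℕ} (A : Set (ZMod n)) (S T : List (ZMod n)) : Prop :=
  ∃ c : ZMod n, IsUnit c ∧ ∃ w : List (ZMod n), w.length = S.length ∧
    (∀ a ∈ w, a ∈ A) ∧ (T.map fun y => c * y).Perm (List.zipWith (· * ·) w S)

/-! ### Auxiliary lemmas -/

lemma zmod2_ne_zero (x : ZMod 2) (h : x ≠ 0) : x = 1 := by revert h; revert x; decide

lemma zip_sum_zero {R : Type*} [NonUnitalNonAssocSemiring R] {ι : Type*} (h : ι → R) :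
    ∀ (l : List ι) (w : List R), (∀ i ∈ l, h i = 0) →
      (List.zipWith (· * ·) w (l.map h)).sum = 0 := by
  intro l
  induction l with
  | nil => intro w _; simp
  | cons b l ih =>
    intro w hz
    cases w with
    | nil => simp
    | cons u w =>
      simp only [List.map_cons, List.zipWith_cons_cons, List.sum_cons]
      rw [hz b (by simp), mul_zero, ih w (fun i hi => hz i (by simp [hi])), add_zero]

lemma zip_sum_single {R : Type*} [NonUnitalNonAssocSemiring R] {ι : Type*} (h : ι → R) (i₀ : ι) :
    ∀ (l : List ι) (w : List R), w.length = l.length → l.Nodup → i₀ ∈ l →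
      (∀ i ∈ l, i ≠ i₀ → h i = 0) →
      ∃ u ∈ w, (List.zipWith (· * ·) w (l.map h)).sum = u * h i₀ := by
  intro l
  induction l with
  | nil => intro w _ _ hm; simp at hm
  | cons b l ih =>
    intro w hlen hnd hm hz
    cases w with
    | nil => simp at hlen
    | cons u w =>
      simp only [List.map_cons, List.zipWith_cons_cons, List.sum_cons]
      rcases List.mem_cons.mp hm with rfl | hm'
      · refine ⟨u, by simp, ?_⟩
        rw [zip_sum_zero h l w ?_, add_zero]
        intro i hi
        exact hz i (by simp [hi]) (fun he => (List.nodup_cons.mp hnd).1 (he ▸ hi))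
      · obtain ⟨v, hv, hsum⟩ := ih w (by simpa using hlen) (List.nodup_cons.mp hnd).2 hm'
          (fun i hi hne => hz i (by simp [hi]) hne)
        refine ⟨v, by simp [hv], ?_⟩
        rw [hsum, hz b (by simp) ?_, mul_zero, zero_add]
        intro he; exact (List.nodup_cons.mp hnd).1 (he ▸ hm')

lemma map_zip_sum {R S : Type*} [NonAssocSemiring R] [NonAssocSemiring S] (f : R →+* S) :
    ∀ (w T : List R), f (List.zipWith (· * ·) w T).sum
      = (List.zipWith (· * ·) (w.map f) (T.map f)).sum := by
  intro w
  induction w with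
  | nil => intro T; simp
  | cons u w ih =>
    intro T
    cases T with
    | nil => simp
    | cons t T => simp [ih T]

lemma zip_sum_ones {R : Type*} [NonAssocSemiring R] :
    ∀ (w T : List R), w.length = T.length → (∀ u ∈ w, u = 1) → (∀ t ∈ T, t = 1) →
      (List.zipWith (· * ·) w T).sum = (T.length : R) := by
  intro w
  induction w with
  | nil => intro T hlen _ _; rw [List.length_nil] at hlen; simp [(List.length_eq_zero_iff).mp hlen.symm]
  | cons u w ih =>
    intro T hlen hw hT
    cases T with
    | nil => simp at hlen
    | cons t T =>
      simp only [List.zipWith_cons_cons, List.sum_cons, List.length_cons]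
      rw [hw u (by simp), hT t (by simp), one_mul,
        ih T (by simpa using hlen) (fun x hx => hw x (by simp [hx])) (fun x hx => hT x (by simp [hx]))]
      push_cast; rw [add_comm]

lemma zip_map_sum {M : Type*} [NonUnitalNonAssocSemiring M] {ι : Type*} (f g : ι → M) :
    ∀ l : List ι, (List.zipWith (· * ·) (l.map f) (l.map g)).sum = (l.map fun i => f i * g i).sum := by
  intro l; induction l with
  | nil => simp
  | cons b l ih => simp [ih]

lemma filter_map_sum {M : Type*} [AddCommMonoid M] {ι : Type*} (h : ι → M) (q : ι → Bool) :
    ∀ l : List ι, (((l.filter q).map h).sum) = (l.map fun i => if q i then h i else 0).sum := by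
  intro l; induction l with
  | nil => simp
  | cons b l ih =>
    by_cases hb : q b
    · rw [List.filter_cons_of_pos hb, List.map_cons, List.sum_cons, ih, List.map_cons,
        List.sum_cons, if_pos hb]
    · rw [List.filter_cons_of_neg (by simpa using hb), ih, List.map_cons, List.sum_cons,
        if_neg hb, zero_add]

open Finset in
lemma exists_unit_sum_zero {F : Type*} [Field F] {ι : Type*} :
    ∀ (t : Finset ι), Even t.card → (y : ι → F) → (∀ i ∈ t, y i ≠ 0) →
      ∃ w : ι → F, (∀ i, IsUnit (w i)) ∧ ∑ i ∈ t, w i * y i = 0 := by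
  classical
  intro t
  induction t using Finset.strongInduction with
  | _ t ih =>
    intro hev y hy
    rcases t.eq_empty_or_nonempty with rfl | ⟨i, hi⟩
    · exact ⟨fun _ => 1, fun _ => isUnit_one, by simp⟩
    · have hcard : 2 ≤ t.card := by
        rcases hev with ⟨c, hc⟩
        have : 0 < t.card := Finset.card_pos.mpr ⟨i, hi⟩
        omega
      have h1 : (t.erase i).Nonempty := by
        rw [← Finset.card_pos, Finset.card_erase_of_mem hi]; omega
      obtain ⟨j, hj⟩ := h1
      have hji : j ≠ i := Finset.ne_of_mem_erase hj
      set t' := (t.erase i).erase j with ht'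
      have hss : t' ⊂ t := by
        refine Finset.ssubset_iff_of_subset ?_ |>.mpr ⟨i, hi, by simp [ht']⟩
        exact (Finset.erase_subset _ _).trans (Finset.erase_subset _ _)
      have hcard' : t'.card = t.card - 2 := by
        rw [ht', Finset.card_erase_of_mem hj, Finset.card_erase_of_mem hi]; omega
      obtain ⟨w', hw'u, hw's⟩ := ih t' hss (by rcases hev with ⟨c, hc⟩; refine ⟨c-1, ?_⟩; omega)
        y (fun k hk => hy k (Finset.mem_of_mem_erase (Finset.mem_of_mem_erase hk)))
      have hint' : i ∉ t' := by simp [ht']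
      have hjnt' : j ∉ t' := by simp [ht']
      have hij : i ≠ j := Ne.symm hji
      refine ⟨fun k => if k = i then (y i)⁻¹ else if k = j then -(y j)⁻¹ else w' k, ?_, ?_⟩
      · intro k
        dsimp only
        split
        · exact (isUnit_iff_ne_zero).mpr (inv_ne_zero (hy i hi))
        · split
          · exact ((isUnit_iff_ne_zero).mpr
              (inv_ne_zero (hy j (Finset.mem_of_mem_erase hj)))).neg
          · exact hw'u k
      · have e1 : ∑ k ∈ t', (if k = i then (y i)⁻¹ else if k = j then -(y j)⁻¹ else w' k) * y k
            = ∑ k ∈ t', w' k * y k := by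
          refine Finset.sum_congr rfl (fun k hk => ?_)
          have hki : k ≠ i := fun h => hint' (h ▸ hk)
          have hkj : k ≠ j := fun h => hjnt' (h ▸ hk)
          simp [hki, hkj]
        have hde : t = insert i (insert j t') := by
          rw [ht', Finset.insert_erase hj, Finset.insert_erase hi]
        rw [hde, Finset.sum_insert (by simp [hjnt', hij, hint']),
          Finset.sum_insert hjnt']
        simp only []
        rw [if_neg hji, if_true, if_true, e1, hw's, add_zero,
          inv_mul_cancel₀ (hy i hi), neg_mul, inv_mul_cancel₀ (hy j (Finset.mem_of_mem_erase hj))]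
        ring

open Finset in
lemma exists_unit_weights {F : Type*} [Field F] {ι : Type*}
    (s t : Finset ι) (hts : t ⊆ s) (y : ι → F)
    (hmem : ∀ i ∈ s, (y i ≠ 0 ↔ i ∈ t)) (h : Even t.card) :
    ∃ w : ι → F, (∀ i, IsUnit (w i)) ∧ ∑ i ∈ s, w i * y i = 0 := by
  classical
  obtain ⟨w, hwu, hws⟩ := exists_unit_sum_zero t h y
    (fun i hi => (hmem i (hts hi)).mpr hi)
  refine ⟨w, hwu, ?_⟩
  rw [← Finset.sum_subset hts (fun x hx hnx => ?_), hws]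
  have : y x = 0 := not_not.mp (fun hyx => hnx ((hmem x hx).mp hyx))
  rw [this, mul_zero]

/-! ### The upper bound: `D_{U(n)}(n) ≤ Ω(n) + 1` for squarefree `n` -/

lemma upper_bound {ι : Type*} [Fintype ι] (a : ι → ℕ) (hp : ∀ i, (a i).Prime)
    (hcop : Pairwise (Function.onFun Nat.Coprime a)) :
    ∀ S : List (ZMod (∏ i, a i)), S.length = Fintype.card ι + 1 →
      HasWZS (U (∏ i, a i)) S := by
  classical
  intro S hS
  let φ := ZMod.prodEquivPi a hcop
  haveI : Fact (Nat.Prime 2) := ⟨Nat.prime_two⟩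
  set v : Fin S.length → (ι → ZMod 2) :=
    (fun i j => if (φ (S.get i)) j = 0 then 0 else 1) with hv
  have hnli : ¬ LinearIndependent (ZMod 2) v := by
    intro hli
    have h1 := hli.fintype_card_le_finrank
    rw [Module.finrank_pi, Fintype.card_fin] at h1
    omega
  obtain ⟨g, hgs, i₀, hgi⟩ := Fintype.not_linearIndependent_iff.mp hnli
  set I : Finset (Fin S.length) := Finset.univ.filter (fun i => g i ≠ 0) with hI
  have hi₀ : i₀ ∈ I := by simp [hI, hgi]
  have hev : ∀ j, Even ((I.filter (fun i => (φ (S.get i)) j ≠ 0)).card) := by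
    intro j
    have h1 := congrFun hgs j
    rw [Finset.sum_apply] at h1
    have e2 : ∑ i : Fin S.length, (g i • v i) j
        = ∑ i ∈ I, v i j := by
      rw [← Finset.sum_filter_of_ne (p := fun i => g i ≠ 0)
        (fun x _ hx => by intro hgx; apply hx; simp [hgx])]
      refine Finset.sum_congr rfl (fun i hi => ?_)
      have : g i = 1 := zmod2_ne_zero _ (by simpa [hI] using hi)
      simp [this]
    have e3 : ∑ i ∈ I, v i j
        = ((I.filter (fun i => (φ (S.get i)) j ≠ 0)).card : ZMod 2) := by
      rw [← Finset.sum_boole]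
      refine Finset.sum_congr rfl (fun i hi => ?_)
      simp only [hv]
      by_cases hz : (φ (S.get i)) j = 0 <;> simp [hz]
    have h0 : ((I.filter (fun i => (φ (S.get i)) j ≠ 0)).card : ZMod 2) = 0 := by
      rw [← e3, ← e2, h1]; rfl
    rw [ZMod.natCast_eq_zero_iff] at h0
    obtain ⟨c, hc⟩ := h0
    exact ⟨c, by omega⟩
  have key : ∀ j, ∃ w : Fin S.length → ZMod (a j), (∀ i, IsUnit (w i)) ∧
      ∑ i ∈ I, w i * (φ (S.get i)) j = 0 := by
    intro j
    haveI : Fact (a j).Prime := ⟨hp j⟩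
    exact exists_unit_weights I (I.filter (fun i => (φ (S.get i)) j ≠ 0))
      (Finset.filter_subset _ _) (fun i => (φ (S.get i)) j)
      (fun i hi => by simp [Finset.mem_filter, hi]) (hev j)
  choose w hwu hws using key
  set W : Fin S.length → ZMod (∏ i, a i) := fun i => φ.symm (fun j => w j i) with hW
  have hWu : ∀ i, IsUnit (W i) := by
    intro i
    have hu : IsUnit (fun j => w j i : ∀ j, ZMod (a j)) := by
      rw [isUnit_iff_exists_inv]
      refine ⟨fun j => ((hwu j i).unit⁻¹ : (ZMod (a j))ˣ), ?_⟩
      funext j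
      exact (hwu j i).mul_val_inv
    exact hu.map φ.symm.toRingHom
  have hsum0 : ∑ i ∈ I, W i * S.get i = 0 := by
    apply φ.injective
    rw [map_sum, map_zero]
    funext j
    rw [Finset.sum_apply]
    have e4 : ∀ i ∈ I, (φ (W i * S.get i)) j = w j i * (φ (S.get i)) j := by
      intro i _
      rw [map_mul]
      have : φ (W i) = fun j => w j i := φ.apply_symm_apply _
      rw [this]
      rfl
    rw [Finset.sum_congr rfl e4, hws j]
    rfl
  set lf : List (Fin S.length) := (List.finRange S.length).filter (fun i => decide (i ∈ I))
    with hlf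
  have hSeq : S = (List.finRange S.length).map S.get := by
    rw [← List.ofFn_eq_map, List.ofFn_get]
  refine ⟨lf.map S.get, ?_, ?_, lf.map W, by simp, ?_, ?_⟩
  · conv_rhs => rw [hSeq]
    exact List.Sublist.map _ List.filter_sublist
  · have : S.get i₀ ∈ lf.map S.get := by
      refine List.mem_map_of_mem ?_
      rw [hlf, List.mem_filter]
      exact ⟨List.mem_finRange _, by simpa using hi₀⟩
    exact List.ne_nil_of_mem this
  · intro b hb
    obtain ⟨i, _, rfl⟩ := List.mem_map.mp hb
    exact hWu i
  · rw [zip_map_sum, hlf, filter_map_sum, ← Fin.sum_univ_def]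
    have hdec : ∀ i : Fin S.length, (if (decide (i ∈ I) : Bool) then W i * S.get i else 0)
        = (if i ∈ I then W i * S.get i else 0) := fun i => by simp
    rw [Finset.sum_congr rfl (fun i _ => hdec i), Finset.sum_ite_mem, Finset.univ_inter, hsum0]

open Classical in
lemma pcount_cons {α : Type*} (P : α → Prop) (x : α) (S : List α) :
    pcount P (x :: S) = pcount P S + (if P x then 1 else 0) := by
  rw [pcount, pcount, List.countP_cons]
  congr 1
  by_cases h : P x
  · rw [if_pos (decide_eq_true h), if_pos h]
  · rw [if_neg (by simp [h]), if_neg h]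

open Classical in
lemma pcount_eq_length {α : Type*} (P : α → Prop) (S : List α) (h : ∀ x ∈ S, P x) :
    pcount P S = S.length := by
  rw [pcount]
  exact List.countP_eq_length.mpr (fun a ha => decide_eq_true (h a ha))

/-! ### The extremal sequence has no weighted zero-sum subsequence -/

lemma no_wzs (r : ℕ) (p : Fin r → ℕ) (hp : ∀ i, (p i).Prime)
    (hpodd : ∀ i, p i ≠ 2) (hinj : Function.Injective p)
    (a : ℕ) (ha : a = 1 ∨ a = 2)
    (hoddcount : Odd (pcount
      (fun x => ZMod.castHom (dvd_mul_right 2 (∏ i, p i)) (ZMod 2) x = 1)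
      ((a : ZMod (2 * ∏ i, p i)) ::
        List.ofFn fun i => (((2 * ∏ j, p j) / (2 * p i) : ℕ) : ZMod (2 * ∏ j, p j))))) :
    ¬ HasWZS (U (2 * ∏ i, p i))
      ((a : ZMod (2 * ∏ i, p i)) ::
        List.ofFn fun i => (((2 * ∏ j, p j) / (2 * p i) : ℕ) : ZMod (2 * ∏ j, p j))) := by
  classical
  rintro ⟨T, hsub, hne, w, hlen, hwU, hsum⟩
  haveI : Fact (Nat.Prime 2) := ⟨Nat.prime_two⟩
  have hQ : ∀ i : Fin r, (2 * ∏ j, p j) / (2 * p i) = ∏ j ∈ Finset.univ.erase i, p j := by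
    intro i
    rw [← Finset.mul_prod_erase Finset.univ p (Finset.mem_univ i), ← mul_assoc]
    exact Nat.mul_div_cancel_left _ (Nat.mul_pos two_pos (hp i).pos)
  have hQdvd : ∀ i k : Fin r, k ≠ i → p i ∣ (2 * ∏ j, p j) / (2 * p k) := by
    intro i k hki
    rw [hQ k]
    exact Finset.dvd_prod_of_mem p (Finset.mem_erase.mpr ⟨Ne.symm hki, Finset.mem_univ i⟩)
  have hQnot : ∀ i : Fin r, ¬ p i ∣ (2 * ∏ j, p j) / (2 * p i) := by
    intro i hdvd
    rw [hQ i] at hdvd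
    obtain ⟨j, hj, hdj⟩ := ((hp i).prime.dvd_finset_prod_iff p).mp hdvd
    exact (Finset.mem_erase.mp hj).1
      (hinj ((Nat.prime_dvd_prime_iff_eq (hp i) (hp j)).mp hdj)).symm
  have hQodd : ∀ i : Fin r, ¬ 2 ∣ (2 * ∏ j, p j) / (2 * p i) := by
    intro i hdvd
    rw [hQ i] at hdvd
    obtain ⟨j, hj, hdj⟩ := (Nat.prime_two.prime.dvd_finset_prod_iff p).mp hdvd
    exact hpodd j ((Nat.prime_dvd_prime_iff_eq Nat.prime_two (hp j)).mp hdj).symm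
  have hpdvdn : ∀ i : Fin r, p i ∣ 2 * ∏ j, p j := fun i =>
    Dvd.dvd.mul_left (Finset.dvd_prod_of_mem p (Finset.mem_univ i)) 2
  have hpa : ∀ i : Fin r, ¬ p i ∣ a := by
    intro i hdvd
    have h2 := (hp i).two_le
    rcases ha with rfl | rfl
    · exact (hp i).ne_one (Nat.dvd_one.mp hdvd)
    · have := Nat.le_of_dvd two_pos hdvd
      exact hpodd i (by omega)
  rcases List.sublist_cons_iff.mp hsub with hTL | ⟨T', hTeq, hT'⟩
  · -- the subsequence does not contain `a`
    rw [List.ofFn_eq_map] at hTL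
    obtain ⟨l, hl, rfl⟩ := List.sublist_map_iff.mp hTL
    have hlnd := hl.nodup (List.nodup_finRange r)
    obtain ⟨i₀, hi₀⟩ := List.exists_mem_of_ne_nil l (fun h => hne (by rw [h]; rfl))
    haveI : Fact (p i₀).Prime := ⟨hp i₀⟩
    set ψ := ZMod.castHom (hpdvdn i₀) (ZMod (p i₀)) with hψ
    have hs0 := congrArg ψ hsum
    rw [map_zip_sum, map_zero, List.map_map] at hs0
    obtain ⟨u', hu'm, hval⟩ := zip_sum_single
      (ψ ∘ fun i => (((2 * ∏ j, p j) / (2 * p i) : ℕ) : ZMod (2 * ∏ j, p j))) i₀ l (w.map ψ)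
      (by simpa using hlen) hlnd hi₀
      (fun k _ hki => by
        show ψ _ = 0
        rw [map_natCast, ZMod.natCast_eq_zero_iff]
        exact hQdvd i₀ k hki)
    rw [hval] at hs0
    obtain ⟨u, hum, rfl⟩ := List.mem_map.mp hu'm
    have huu : IsUnit (ψ u) := (hwU u hum).map ψ
    have hne0 : (ψ ∘ fun i => (((2 * ∏ j, p j) / (2 * p i) : ℕ) : ZMod (2 * ∏ j, p j))) i₀ ≠ 0 := by
      show ψ _ ≠ 0
      rw [map_natCast, Ne, ZMod.natCast_eq_zero_iff]
      exact hQnot i₀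
    exact (mul_ne_zero huu.ne_zero hne0) hs0
  · -- the subsequence contains `a`
    rw [List.ofFn_eq_map] at hT'
    obtain ⟨l, hl, hT'eq⟩ := List.sublist_map_iff.mp hT'
    subst hT'eq
    subst hTeq
    have hlnd := hl.nodup (List.nodup_finRange r)
    cases w with
    | nil => simp at hlen
    | cons u0 w' =>
      simp only [List.zipWith_cons_cons, List.sum_cons] at hsum
      have hu0 : IsUnit u0 := hwU u0 (by simp)
      have hw'U : ∀ u ∈ w', IsUnit u := fun u hu => hwU u (by simp [hu])
      have hlenw : w'.length = l.length := by simpa using hlen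
      have hall : ∀ i : Fin r, i ∈ l := by
        intro i
        by_contra hi
        haveI : Fact (p i).Prime := ⟨hp i⟩
        set ψ := ZMod.castHom (hpdvdn i) (ZMod (p i)) with hψ
        have hs0 := congrArg ψ hsum
        rw [map_add, map_mul, map_zip_sum, map_zero, List.map_map] at hs0
        have hrest : (List.zipWith (· * ·) (w'.map ψ)
            (l.map (ψ ∘ fun k => (((2 * ∏ j, p j) / (2 * p k) : ℕ) : ZMod (2 * ∏ j, p j))))).sum
            = 0 := by
          refine zip_sum_zero _ l (w'.map ψ) (fun k hk => ?_)
          show ψ _ = 0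
          rw [map_natCast, ZMod.natCast_eq_zero_iff]
          exact hQdvd i k (fun he => hi (he ▸ hk))
        rw [hrest, add_zero, map_natCast] at hs0
        have h2 : ((a : ℕ) : ZMod (p i)) ≠ 0 := by
          rw [Ne, ZMod.natCast_eq_zero_iff]
          exact hpa i
        exact (mul_ne_zero ((hu0.map ψ)).ne_zero h2) hs0
      have hlfull : l = List.finRange r := by
        refine hl.eq_of_length ?_
        rw [List.length_finRange]
        have h3 : l.toFinset = (Finset.univ : Finset (Fin r)) :=
          Finset.eq_univ_iff_forall.mpr (fun i => List.mem_toFinset.mpr (hall i))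
        rw [← List.toFinset_card_of_nodup hlnd, h3, Finset.card_univ, Fintype.card_fin]
      subst hlfull
      set ψ2 := ZMod.castHom (dvd_mul_right 2 (∏ i, p i)) (ZMod 2) with hψ2
      have hQone : ∀ k : Fin r,
          ψ2 ((((2 * ∏ j, p j) / (2 * p k) : ℕ) : ZMod (2 * ∏ j, p j))) = 1 := by
        intro k
        rw [map_natCast]
        refine zmod2_ne_zero _ ?_
        rw [Ne, ZMod.natCast_eq_zero_iff]
        exact hQodd k
      have hs0 := congrArg ψ2 hsum
      rw [map_add, map_mul, map_zip_sum, map_zero, List.map_map] at hs0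
      have hones : (List.zipWith (· * ·) (w'.map ψ2)
          ((List.finRange r).map
            (ψ2 ∘ fun k => (((2 * ∏ j, p j) / (2 * p k) : ℕ) : ZMod (2 * ∏ j, p j))))).sum
          = (r : ZMod 2) := by
        rw [zip_sum_ones (w'.map ψ2) _
          (by simp [hlenw])
          (fun u hu => by
            obtain ⟨u₁, hu₁, rfl⟩ := List.mem_map.mp hu
            exact zmod2_ne_zero _ ((hw'U u₁ hu₁).map ψ2).ne_zero)
          (fun t ht => by
            obtain ⟨k, _, rfl⟩ := List.mem_map.mp ht
            exact hQone k)]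
        simp
      rw [hones, map_natCast] at hs0
      have hu01 : ψ2 u0 = 1 := zmod2_ne_zero _ (hu0.map ψ2).ne_zero
      rw [hu01, one_mul] at hs0
      -- now analyze the parity count
      have hallone : ∀ x ∈ (List.ofFn fun i =>
          (((2 * ∏ j, p j) / (2 * p i) : ℕ) : ZMod (2 * ∏ j, p j))),
          ψ2 x = 1 := by
        intro x hx
        obtain ⟨k, hk⟩ := List.mem_ofFn.mp hx
        rw [← hk]
        exact hQone k
      rw [pcount_cons, pcount_eq_length _ _ hallone, List.length_ofFn] at hoddcount
      rcases ha with rfl | rfl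
      · have hψa : ψ2 ((1 : ℕ) : ZMod (2 * ∏ i, p i)) = 1 := by rw [map_natCast]; norm_num
        rw [if_pos hψa] at hoddcount
        -- hoddcount : Odd (r + 1), so r is even
        obtain ⟨c, hc⟩ := hoddcount
        have hrdvd : 2 ∣ r := ⟨c, by omega⟩
        have hr0 : ((r : ℕ) : ZMod 2) = 0 := (ZMod.natCast_eq_zero_iff r 2).mpr hrdvd
        rw [Nat.cast_one, hr0, add_zero] at hs0
        exact one_ne_zero hs0
      · have hψa : ψ2 ((2 : ℕ) : ZMod (2 * ∏ i, p i)) = 0 := by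
          rw [map_natCast]
          exact ZMod.natCast_self 2
        rw [if_neg (by rw [hψa]; exact zero_ne_one)] at hoddcount
        -- hoddcount : Odd (r + 0), so r is odd
        obtain ⟨c, hc⟩ := hoddcount
        have hrnd : ¬ 2 ∣ r := by omega
        have hr1 : ((r : ℕ) : ZMod 2) = 1 := by
          refine zmod2_ne_zero _ ?_
          rw [Ne, ZMod.natCast_eq_zero_iff]
          exact hrnd
        have h20 : ((2 : ℕ) : ZMod 2) = 0 := ZMod.natCast_self 2
        rw [h20, hr1, zero_add] at hs0
        exact one_ne_zero hs0

/-- `2` prepended to the list of odd primes. -/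
def consFun (r : ℕ) (p : Fin r → ℕ) : Fin (r + 1) → ℕ := Fin.cons 2 p

/-! ### Main theorem -/

/-- Let `n = 2 * p 1 * ... * p r` be squarefree with the `p i` distinct odd primes, let
`phat i = n / (2 * p i)`, and choose `a ∈ {1, 2}` so that `S = (a, phat 1, ..., phat r)`
has an odd number of odd terms. Then `S` is a `U(n)`-extremal sequence for the Davenport
constant: it has length `D_{U(n)}(n) - 1` and no `U(n)`-weighted zero-sum subsequence. -/
theorem davenport_extremal_hat (r : ℕ) (p : Fin r → ℕ) (hp : ∀ i, (p i).Prime)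
    (hpodd : ∀ i, p i ≠ 2) (hinj : Function.Injective p)
    (a : ℕ) (ha : a = 1 ∨ a = 2)
    (hoddcount : Odd (pcount
      (fun x => ZMod.castHom (dvd_mul_right 2 (∏ i, p i)) (ZMod 2) x = 1)
      ((a : ZMod (2 * ∏ i, p i)) ::
        List.ofFn fun i => (((2 * ∏ j, p j) / (2 * p i) : ℕ) : ZMod (2 * ∏ j, p j))))) :
    ((a : ZMod (2 * ∏ i, p i)) ::
        List.ofFn fun i => (((2 * ∏ j, p j) / (2 * p i) : ℕ) : ZMod (2 * ∏ j, p j))).length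
      = DavC (2 * ∏ i, p i) (U (2 * ∏ i, p i)) - 1 ∧
    ¬ HasWZS (U (2 * ∏ i, p i))
      ((a : ZMod (2 * ∏ i, p i)) ::
        List.ofFn fun i => (((2 * ∏ j, p j) / (2 * p i) : ℕ) : ZMod (2 * ∏ j, p j))) := by
  have hnowzs := no_wzs r p hp hpodd hinj a ha hoddcount
  have hlenS : ((a : ZMod (2 * ∏ i, p i)) ::
      List.ofFn fun i => (((2 * ∏ j, p j) / (2 * p i) : ℕ) : ZMod (2 * ∏ j, p j))).length
      = r + 1 := by simp
  -- membership facts for the defining set of `DavC`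
  set D : Set ℕ := {k | 0 < k ∧ ∀ S : List (ZMod (2 * ∏ i, p i)), S.length = k →
    HasWZS (U (2 * ∏ i, p i)) S} with hD
  have hup : ∀ k, k ∈ D → k + 1 ∈ D := by
    rintro k ⟨_, hk⟩
    refine ⟨Nat.succ_pos k, ?_⟩
    intro S hS
    cases S with
    | nil => simp at hS
    | cons x S' =>
      obtain ⟨T, hT1, hT2, hT3⟩ := hk S' (by simpa using hS)
      exact ⟨T, hT1.trans (List.sublist_cons_self x S'), hT2, hT3⟩
  have hmono : ∀ k k', k ∈ D → k ≤ k' → k' ∈ D := by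
    intro k k' hk hkk
    induction k' , hkk using Nat.le_induction with
    | base => exact hk
    | succ m _ ih => exact hup m ih
  -- upper bound : r + 2 ∈ D
  have hczero : consFun r p 0 = 2 := rfl
  have hcsucc : ∀ i : Fin r, consFun r p i.succ = p i := fun i => by
    simp [consFun]
  have hconsprime : ∀ j : Fin (r + 1), (consFun r p j).Prime := by
    intro j
    induction j using Fin.cases with
    | zero => rw [hczero]; exact Nat.prime_two
    | succ i => rw [hcsucc]; exact hp i
  have hconscop : Pairwise (Function.onFun Nat.Coprime (consFun r p)) := by
    intro i j hij
    show Nat.Coprime (consFun r p i) (consFun r p j)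
    induction i using Fin.cases with
    | zero =>
      induction j using Fin.cases with
      | zero => exact absurd rfl hij
      | succ j' =>
        rw [hczero, hcsucc]
        exact (Nat.coprime_primes Nat.prime_two (hp j')).mpr (Ne.symm (hpodd j'))
    | succ i' =>
      induction j using Fin.cases with
      | zero =>
        rw [hczero, hcsucc]
        exact (Nat.coprime_primes (hp i') Nat.prime_two).mpr (hpodd i')
      | succ j' =>
        rw [hcsucc, hcsucc]
        refine (Nat.coprime_primes (hp i') (hp j')).mpr (fun he => hij ?_)
        rw [hinj he]
  have hn : (2 * ∏ i, p i) = ∏ j : Fin (r + 1), consFun r p j := by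
    rw [show ∏ j : Fin (r + 1), consFun r p j = ∏ j : Fin (r + 1), Fin.cons 2 p j from rfl,
      Fin.prod_cons]
  have hr2 : (r + 2) ∈ D := by
    refine ⟨by omega, ?_⟩
    rw [hn]
    intro S hS
    exact upper_bound (consFun r p) hconsprime hconscop S
      (by rw [hS, Fintype.card_fin])
  have hr1 : (r + 1) ∉ D := by
    rintro ⟨_, hk⟩
    exact hnowzs (hk _ hlenS)
  have hDav : DavC (2 * ∏ i, p i) (U (2 * ∏ i, p i)) = r + 2 := by
    rw [DavC, ← hD]
    refine le_antisymm (Nat.sInf_le hr2) ?_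
    by_contra hlt
    push_neg at hlt
    have hmem : sInf D ∈ D := Nat.sInf_mem ⟨r + 2, hr2⟩
    exact hr1 (hmono _ _ hmem (by omega))
  refine ⟨?_, hnowzs⟩
  rw [hlenS, hDav]

  omega
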